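/- Let A ⊆ ℚ̄ be a subset containing only finitely many roots of unity. Then inf I_N(A) = inf I_B(A), where the infima are taken in ℝ ∪ {±∞}. -/

import Mathlib

open Polynomial

noncomputable section

/-- The primitive integer minimal polynomial of an algebraic number `x ∈ ℂ`. -/
def intMinpoly (x : ℂ) : Polynomial ℤ :=
  (IsLocalization.integerNormalization (nonZeroDivisors ℤ) (minpoly ℚ x)).primPart

/-- `deg(x) = [ℚ(x):ℚ]`, the degree of an algebraic number. -/
def degQ (x : ℂ) : ℕ := (minpoly ℚ x).natDegree

/-- The absolute logarithmic Weil height of an algebraic number `x`, given as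
`(1/deg x) · log (|a₀| · ∏ max(1,|conjugate|))` where `a₀` is the leading coefficient of the
primitive integer minimal polynomial of `x` and the product runs over the complex roots
of that polynomial (i.e. the conjugates of `x`). -/
def weilHeight (x : ℂ) : ℝ :=
  (degQ x : ℝ)⁻¹ *
    Real.log (((intMinpoly x).leadingCoeff.natAbs : ℝ) *
      (((intMinpoly x).map (Int.castRingHom ℂ)).roots.map
        (fun z => max 1 ‖z‖)).prod)

/-- The `γ`-weighted Weil height `h_γ(x) = deg(x)^γ · h(x)`. -/
def wheight (γ : ℝ) (x : ℂ) : ℝ := (degQ x : ℝ) ^ γ * weilHeight x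

/-- `x` is a root of unity. -/
def IsRootOfUnity (x : ℂ) : Prop := ∃ n : ℕ, 0 < n ∧ x ^ n = 1

/-- `μ_A`, the set of roots of unity contained in `A`. -/
def muSet (A : Set ℂ) : Set ℂ := {a ∈ A | IsRootOfUnity a}

/-- `A` has the `γ`-Northcott property: for every `C > 0` there are only finitely many
`a ∈ A` with `h_γ(a) < C`. -/
def NorthcottProp (γ : ℝ) (A : Set ℂ) : Prop :=
  ∀ C : ℝ, 0 < C → {a ∈ A | wheight γ a < C}.Finite

/-- `A` has the `γ`-Bogomolov property: for some `C > 0` there are only finitely many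
`a ∈ A ∖ μ_A` with `h_γ(a) < C`. -/
def BogomolovProp (γ : ℝ) (A : Set ℂ) : Prop :=
  ∃ C : ℝ, 0 < C ∧ {a ∈ A \ muSet A | wheight γ a < C}.Finite

/-- The `γ`-Northcott number `Nor_γ(A) = inf {C > 0 | N_γ(A,C) = ∞}` (equal to `∞` if
`N_γ(A,C)` is finite for every `C`). -/
def northcottNumber (γ : ℝ) (A : Set ℂ) : EReal :=
  sInf {x : EReal | ∃ C : ℝ, x = (C : EReal) ∧ 0 < C ∧ ¬ {a ∈ A | wheight γ a < C}.Finite}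

/-- `I_N(A) = {γ ∈ ℝ | A has γ-(N)}`. -/
def IN (A : Set ℂ) : Set ℝ := {γ | NorthcottProp γ A}

/-- `I_B(A) = {γ ∈ ℝ | A has γ-(B)}`. -/
def IB (A : Set ℂ) : Set ℝ := {γ | BogomolovProp γ A}

lemma degQ_pos {x : ℂ} (hx : IsAlgebraic ℚ x) : 0 < degQ x :=
  minpoly.natDegree_pos hx.isIntegral

lemma intMinpoly_ne_zero (x : ℂ) : intMinpoly x ≠ 0 :=
  Polynomial.primPart_ne_zero _

lemma intMinpoly_natDegree {x : ℂ} (hx : IsAlgebraic ℚ x) :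
    (intMinpoly x).natDegree = degQ x := by
  rw [intMinpoly, Polynomial.natDegree_primPart]
  obtain ⟨b, hb⟩ := IsLocalization.integerNormalization_map_to_map (nonZeroDivisors ℤ)
    (minpoly ℚ x)
  have hinj : Function.Injective (algebraMap ℤ ℚ) := fun a b h => by exact_mod_cast h
  have := Polynomial.natDegree_map_eq_of_injective hinj
    (IsLocalization.integerNormalization (nonZeroDivisors ℤ) (minpoly ℚ x))
  rw [hb] at this
  have hb0 : ((b : ℤ) : ℚ) ≠ 0 := by exact_mod_cast nonZeroDivisors.coe_ne_zero b
  rw [← this, zsmul_eq_mul, ← Polynomial.C_eq_intCast, Polynomial.natDegree_C_mul hb0]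
  rfl

lemma intMinpoly_aeval {x : ℂ} (hx : IsAlgebraic ℚ x) :
    Polynomial.aeval x (intMinpoly x) = 0 := by
  have h0 : Polynomial.aeval x (minpoly ℚ x) = 0 := minpoly.aeval ℚ x
  have h1 : Polynomial.aeval x
      (IsLocalization.integerNormalization (nonZeroDivisors ℤ) (minpoly ℚ x)) = 0 :=
    IsLocalization.integerNormalization_aeval_eq_zero (nonZeroDivisors ℤ) (minpoly ℚ x) h0
  set p := IsLocalization.integerNormalization (nonZeroDivisors ℤ) (minpoly ℚ x) with hp
  have : p = Polynomial.C p.content * p.primPart := p.eq_C_content_mul_primPart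
  rw [this, map_mul, Polynomial.aeval_C] at h1
  have hc : (algebraMap ℤ ℂ) p.content ≠ 0 := by
    simp only [ne_eq, algebraMap_int_eq, eq_intCast, Int.cast_eq_zero]
    intro h
    have : p ≠ 0 := by
      intro hp0
      have := minpoly.ne_zero hx.isIntegral
      obtain ⟨b, hb⟩ := IsLocalization.integerNormalization_map_to_map (nonZeroDivisors ℤ)
        (minpoly ℚ x)
      rw [← hp, hp0] at hb
      simp only [Polynomial.map_zero] at hb
      rcases smul_eq_zero.mp hb.symm with h1 | h1
      · exact nonZeroDivisors.coe_ne_zero b (by exact_mod_cast h1)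
      · exact this h1
    exact this (Polynomial.content_eq_zero_iff.mp h)
  exact (mul_eq_zero.mp h1).resolve_left hc


lemma abs_esymm_le (s : Multiset ℂ) (k : ℕ) :
    ‖s.esymm k‖ ≤ ((Multiset.card s).choose k : ℝ) *
      (s.map (fun z => max 1 ‖z‖)).prod := by
  set B := (s.map (fun z => max 1 ‖z‖)).prod with hB
  have key : ∀ r ∈ ((s.powersetCard k).map Multiset.prod).map norm, r ≤ B := by
    intro r hr
    obtain ⟨t, ht, rfl⟩ := Multiset.mem_map.mp hr
    obtain ⟨u, hu, rfl⟩ := Multiset.mem_map.mp ht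
    have hu' : u ≤ s := (Multiset.mem_powersetCard.mp hu).1
    obtain ⟨v, rfl⟩ := Multiset.le_iff_exists_add.mp hu'
    rw [show ‖u.prod‖ = (u.map norm).prod from
      Multiset.induction_on u (by simp) (fun a t ih => by simp [norm_mul, ih])]
    have h1 : (u.map norm).prod ≤ (u.map (fun z => max 1 ‖z‖)).prod := by
      apply Multiset.prod_map_le_prod_map₀
      · intro i _; exact norm_nonneg _
      · intro i _; exact le_max_right _ _
    refine h1.trans ?_
    rw [hB, Multiset.map_add, Multiset.prod_add]
    apply le_mul_of_one_le_right
    · apply Multiset.prod_nonneg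
      intro x hx
      obtain ⟨z, _, rfl⟩ := Multiset.mem_map.mp hx
      exact le_trans zero_le_one (le_max_left _ _)
    · apply Multiset.one_le_prod
      intro x hx
      obtain ⟨z, _, rfl⟩ := Multiset.mem_map.mp hx
      exact le_max_left _ _
  have h2 : ‖s.esymm k‖ ≤
      (((s.powersetCard k).map Multiset.prod).map norm).sum := by
    rw [Multiset.esymm]
    refine (norm_multiset_sum_le _).trans ?_
    apply le_of_eq; congr 1
  refine h2.trans ?_
  have h3 := Multiset.sum_le_card_nsmul (((s.powersetCard k).map Multiset.prod).map norm) B key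
  simpa [Multiset.card_powersetCard, nsmul_eq_mul] using h3

lemma choose_le_two_pow (n k : ℕ) : n.choose k ≤ 2 ^ n := by
  rcases le_or_gt k n with h | h
  · calc n.choose k ≤ ∑ m ∈ Finset.range (n+1), n.choose m :=
        Finset.single_le_sum (fun i _ => Nat.zero_le _) (Finset.mem_range.mpr (by omega))
    _ = 2 ^ n := Nat.sum_range_choose n
  · rw [Nat.choose_eq_zero_of_lt h]; exact Nat.zero_le _

/-- Coefficient bound via Mahler measure, for any nonzero integer polynomial. -/
lemma coeff_abs_le (f : Polynomial ℤ) (hf : f ≠ 0) (i : ℕ) :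
    (|f.coeff i| : ℝ) ≤ 2 ^ f.natDegree * ((f.leadingCoeff.natAbs : ℝ) *
      ((f.map (Int.castRingHom ℂ)).roots.map (fun z => max 1 ‖z‖)).prod) := by
  set fC := f.map (Int.castRingHom ℂ) with hfC
  have hinj : Function.Injective (Int.castRingHom ℂ) := fun a b h => by simpa using h
  have hfC0 : fC ≠ 0 := by
    intro h
    exact hf (Polynomial.map_injective _ hinj (by simpa using h))
  have hdeg : fC.natDegree = f.natDegree := Polynomial.natDegree_map_eq_of_injective hinj f
  have hcard : Multiset.card fC.roots = fC.natDegree :=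
    Polynomial.splits_iff_card_roots.mp (IsAlgClosed.splits fC)
  have hlc : fC.leadingCoeff = (f.leadingCoeff : ℂ) := Polynomial.leadingCoeff_map_of_injective hinj f
  set P := (fC.roots.map (fun z => max 1 ‖z‖)).prod with hP
  have hP1 : (1:ℝ) ≤ P := by
    apply Multiset.one_le_prod
    intro x hx
    obtain ⟨z, _, rfl⟩ := Multiset.mem_map.mp hx
    exact le_max_left _ _
  rcases le_or_gt i f.natDegree with hi | hi
  · have hprod := Polynomial.C_leadingCoeff_mul_prod_multiset_X_sub_C (p := fC) hcard
    have hcoeff : (f.coeff i : ℂ) = fC.coeff i := by rw [hfC, Polynomial.coeff_map]; simp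
    have hic : i ≤ Multiset.card fC.roots := by rw [hcard, hdeg]; exact hi
    have h2 : fC.coeff i = fC.leadingCoeff *
        ((-1) ^ (Multiset.card fC.roots - i) * fC.roots.esymm (Multiset.card fC.roots - i)) := by
      conv_lhs => rw [← hprod]
      rw [Polynomial.coeff_C_mul, Multiset.prod_X_sub_C_coeff _ hic]
    have habs : (|f.coeff i| : ℝ) = ‖(f.coeff i : ℂ)‖ := by
      simp [Complex.norm_intCast]
    rw [habs, hcoeff, h2]
    simp only [norm_mul, norm_pow, norm_neg, norm_one, one_pow, one_mul]
    have h3 : ‖fC.leadingCoeff‖ = (f.leadingCoeff.natAbs : ℝ) := by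
      rw [hlc, Complex.norm_intCast, ← Int.cast_abs, Int.abs_eq_natAbs, Int.cast_natCast]
    rw [h3]
    have h4 := abs_esymm_le fC.roots (Multiset.card fC.roots - i)
    calc (f.leadingCoeff.natAbs : ℝ) * ‖fC.roots.esymm (Multiset.card fC.roots - i)‖
        ≤ (f.leadingCoeff.natAbs : ℝ) * (((Multiset.card fC.roots).choose (Multiset.card fC.roots - i) : ℝ) * P) := by
          apply mul_le_mul_of_nonneg_left h4 (by positivity)
      _ ≤ (f.leadingCoeff.natAbs : ℝ) * ((2:ℝ) ^ f.natDegree * P) := by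
          apply mul_le_mul_of_nonneg_left _ (by positivity)
          apply mul_le_mul_of_nonneg_right _ (by linarith)
          rw [hcard, hdeg]
          exact_mod_cast choose_le_two_pow f.natDegree _
      _ = 2 ^ f.natDegree * ((f.leadingCoeff.natAbs : ℝ) * P) := by ring
  · rw [Polynomial.coeff_eq_zero_of_natDegree_lt hi]
    simp only [abs_zero, Int.cast_zero]
    have : (1:ℝ) ≤ (f.leadingCoeff.natAbs : ℝ) := by
      have : f.leadingCoeff ≠ 0 := Polynomial.leadingCoeff_ne_zero.mpr hf
      have : 1 ≤ f.leadingCoeff.natAbs := Nat.one_le_iff_ne_zero.mpr (Int.natAbs_ne_zero.mpr this)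
      exact_mod_cast this
    positivity

/-- The Mahler measure of (the primitive integer minimal polynomial of) `x`. -/
def mahlerM (x : ℂ) : ℝ :=
  ((intMinpoly x).leadingCoeff.natAbs : ℝ) *
    (((intMinpoly x).map (Int.castRingHom ℂ)).roots.map
      (fun z => max 1 ‖z‖)).prod

lemma weilHeight_eq (x : ℂ) :
    weilHeight x = (degQ x : ℝ)⁻¹ * Real.log (mahlerM x) := rfl

lemma one_le_mahlerM (x : ℂ) : 1 ≤ mahlerM x := by
  have hlc : 1 ≤ ((intMinpoly x).leadingCoeff.natAbs : ℝ) := by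
    have h1 : (intMinpoly x).leadingCoeff ≠ 0 :=
      Polynomial.leadingCoeff_ne_zero.mpr (intMinpoly_ne_zero x)
    exact_mod_cast Nat.one_le_iff_ne_zero.mpr (Int.natAbs_ne_zero.mpr h1)
  have hpr : (1:ℝ) ≤ (((intMinpoly x).map (Int.castRingHom ℂ)).roots.map
      (fun z => max 1 ‖z‖)).prod := by
    apply Multiset.one_le_prod
    intro r hr
    obtain ⟨z, _, rfl⟩ := Multiset.mem_map.mp hr
    exact le_max_left _ _
  calc (1:ℝ) = 1 * 1 := by ring
    _ ≤ _ := mul_le_mul hlc hpr zero_le_one (by linarith)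

lemma weilHeight_nonneg (x : ℂ) : 0 ≤ weilHeight x := by
  rw [weilHeight_eq]
  exact mul_nonneg (by positivity) (Real.log_nonneg (one_le_mahlerM x))

lemma mahlerM_lt {x : ℂ} {C0 : ℝ} (hx : IsAlgebraic ℚ x) (h : weilHeight x < C0) :
    mahlerM x < Real.exp (degQ x * C0) := by
  have hd : (0:ℝ) < (degQ x : ℝ) := by exact_mod_cast degQ_pos hx
  rw [weilHeight_eq] at h
  have hlog : Real.log (mahlerM x) < (degQ x : ℝ) * C0 := (inv_mul_lt_iff₀ hd).mp h
  calc mahlerM x = Real.exp (Real.log (mahlerM x)) :=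
        (Real.exp_log (lt_of_lt_of_le one_pos (one_le_mahlerM x))).symm
    _ < Real.exp ((degQ x : ℝ) * C0) := Real.exp_lt_exp.mpr hlog

/-- Classical Northcott: finitely many algebraic numbers of bounded degree and height. -/
lemma northcott_finite (D : ℕ) (C0 : ℝ) :
    {x : ℂ | IsAlgebraic ℚ x ∧ degQ x ≤ D ∧ weilHeight x < C0}.Finite := by
  rcases le_or_gt C0 0 with hC | hC
  · refine Set.Finite.subset Set.finite_empty ?_
    rintro x ⟨_, _, h3⟩
    exact absurd h3 (not_lt.mpr (le_trans hC (weilHeight_nonneg x)))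
  set Bz : ℤ := ⌈(2:ℝ) ^ D * Real.exp (D * C0)⌉ with hBz
  set PS : Set (Polynomial ℤ) :=
    {g | g ≠ 0 ∧ g.natDegree ≤ D ∧ ∀ i : ℕ, |g.coeff i| ≤ Bz} with hPS
  have hinj : Function.Injective (Int.castRingHom ℂ) := fun a b h => by simpa using h
  have hPSfin : PS.Finite := by
    have himg : ((fun (g : Polynomial ℤ) (i : Fin (D+1)) => g.coeff i) '' PS).Finite := by
      apply Set.Finite.subset
        (Set.Finite.pi (fun _ : Fin (D+1) => Set.finite_Icc (-Bz) Bz))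
      rintro _ ⟨g, hg, rfl⟩
      intro i _
      simpa [Set.mem_Icc] using abs_le.mp (hg.2.2 i)
    apply Set.Finite.of_finite_image himg
    intro g hg g' hg' hgg
    ext n
    rcases le_or_gt n D with hn | hn
    · exact congrFun hgg ⟨n, by omega⟩
    · rw [Polynomial.coeff_eq_zero_of_natDegree_lt (lt_of_le_of_lt hg.2.1 hn),
          Polynomial.coeff_eq_zero_of_natDegree_lt (lt_of_le_of_lt hg'.2.1 hn)]
  have hcover : {x : ℂ | IsAlgebraic ℚ x ∧ degQ x ≤ D ∧ weilHeight x < C0} ⊆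
      ⋃ g ∈ PS, {z : ℂ | (g.map (Int.castRingHom ℂ)).IsRoot z} := by
    rintro x ⟨hx, hxD, hxh⟩
    have hmem : intMinpoly x ∈ PS := by
      refine ⟨intMinpoly_ne_zero x, ?_, ?_⟩
      · rw [intMinpoly_natDegree hx]; exact hxD
      · intro i
        have h1 := coeff_abs_le (intMinpoly x) (intMinpoly_ne_zero x) i
        have h2 : (2:ℝ) ^ (intMinpoly x).natDegree *
            (((intMinpoly x).leadingCoeff.natAbs : ℝ) *
            (((intMinpoly x).map (Int.castRingHom ℂ)).roots.map
              (fun z => max 1 ‖z‖)).prod)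
            ≤ (2:ℝ) ^ D * Real.exp (D * C0) := by
          have hm : mahlerM x < Real.exp (degQ x * C0) := mahlerM_lt hx hxh
          have hdD : (intMinpoly x).natDegree ≤ D := by
            rw [intMinpoly_natDegree hx]; exact hxD
          have hpow : (2:ℝ) ^ (intMinpoly x).natDegree ≤ (2:ℝ) ^ D :=
            pow_le_pow_right₀ one_le_two hdD
          have hexp : Real.exp ((degQ x : ℝ) * C0) ≤ Real.exp ((D:ℝ) * C0) := by
            apply Real.exp_le_exp.mpr
            apply mul_le_mul_of_nonneg_right _ (le_of_lt hC)
            exact_mod_cast hxD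
          have hm1 : (0:ℝ) < mahlerM x := lt_of_lt_of_le one_pos (one_le_mahlerM x)
          calc (2:ℝ) ^ (intMinpoly x).natDegree * mahlerM x
              ≤ (2:ℝ) ^ D * mahlerM x := mul_le_mul_of_nonneg_right hpow (le_of_lt hm1)
            _ ≤ (2:ℝ) ^ D * Real.exp ((D:ℝ) * C0) := by
                apply mul_le_mul_of_nonneg_left _ (by positivity)
                exact le_of_lt (lt_of_lt_of_le hm hexp)
        have h3 : (|(intMinpoly x).coeff i| : ℝ) ≤ (Bz : ℝ) :=
          le_trans (le_trans h1 h2) (Int.le_ceil _)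
        exact_mod_cast h3
    apply Set.mem_biUnion hmem
    show ((intMinpoly x).map (Int.castRingHom ℂ)).eval x = 0
    rw [Polynomial.eval_map]
    have := intMinpoly_aeval hx
    rwa [Polynomial.aeval_def, algebraMap_int_eq] at this
  refine Set.Finite.subset (Set.Finite.biUnion hPSfin ?_) hcover
  intro g hg
  apply Polynomial.finite_setOf_isRoot
  intro h0
  exact hg.1 (Polynomial.map_injective _ hinj (by simpa using h0))

lemma IN_subset_IB (A : Set ℂ) : IN A ⊆ IB A := by
  intro γ hγ
  exact ⟨1, one_pos, (hγ 1 one_pos).subset (fun a ha => ⟨ha.1.1, ha.2⟩)⟩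

lemma mem_IN_of_gt {A : Set ℂ} (hA : ∀ a ∈ A, IsAlgebraic ℚ a) (hμ : (muSet A).Finite)
    {γ γ' : ℝ} (hγ : γ ∈ IB A) (hlt : γ < γ') : γ' ∈ IN A := by
  obtain ⟨C, hC, hfin⟩ := hγ
  intro C' hC'
  set ε := γ' - γ with hε
  have hε0 : 0 < ε := by simp only [hε]; linarith
  set Dnat : ℕ := max 1 ⌈(C'/C) ^ (1/ε)⌉₊ with hD
  set C0 : ℝ := C' * max 1 ((Dnat:ℝ) ^ (-γ')) with hC0
  have hsub : {a ∈ A | wheight γ' a < C'} ⊆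
      (muSet A ∪ {a ∈ A \ muSet A | wheight γ a < C}) ∪
      {x : ℂ | IsAlgebraic ℚ x ∧ degQ x ≤ Dnat ∧ weilHeight x < C0} := by
    rintro a ⟨haA, haw⟩
    by_cases hroot : IsRootOfUnity a
    · exact Or.inl (Or.inl ⟨haA, hroot⟩)
    by_cases hwγ : wheight γ a < C
    · exact Or.inl (Or.inr ⟨⟨haA, fun h => hroot h.2⟩, hwγ⟩)
    push_neg at hwγ
    right
    have halg := hA a haA
    have hd1 : (1:ℝ) ≤ (degQ a : ℝ) := by exact_mod_cast degQ_pos halg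
    have hd0 : (0:ℝ) < (degQ a : ℝ) := by linarith
    have hrpow : (degQ a:ℝ) ^ γ' = (degQ a:ℝ) ^ ε * (degQ a:ℝ) ^ γ := by
      rw [← Real.rpow_add hd0]
      congr 1
      simp only [hε]; ring
    have hsplit : wheight γ' a = (degQ a : ℝ) ^ ε * wheight γ a := by
      simp only [wheight]
      rw [hrpow, mul_assoc]
    have hkey : (degQ a : ℝ) ^ ε * C ≤ wheight γ' a := by
      rw [hsplit]
      exact mul_le_mul_of_nonneg_left hwγ (le_of_lt (Real.rpow_pos_of_pos hd0 ε))
    have h5 : (degQ a : ℝ) ^ ε < C'/C := by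
      rw [lt_div_iff₀ hC]
      exact lt_of_le_of_lt hkey haw
    have h6 : (degQ a : ℝ) < (C'/C) ^ (1/ε) := by
      have h := Real.rpow_lt_rpow (le_of_lt (Real.rpow_pos_of_pos hd0 ε)) h5
        (by positivity : (0:ℝ) < 1/ε)
      rwa [← Real.rpow_mul (le_of_lt hd0), mul_one_div, div_self (ne_of_gt hε0),
        Real.rpow_one] at h
    have hdD : degQ a ≤ Dnat := by
      have h7 : (degQ a : ℝ) ≤ (Dnat : ℝ) := by
        have h8 : (C'/C) ^ (1/ε) ≤ (⌈(C'/C) ^ (1/ε)⌉₊ : ℝ) := Nat.le_ceil _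
        have h9 : ((⌈(C'/C) ^ (1/ε)⌉₊ : ℕ) : ℝ) ≤ (Dnat : ℝ) := by
          exact_mod_cast le_max_right 1 ⌈(C'/C) ^ (1/ε)⌉₊
        linarith
      exact_mod_cast h7
    refine ⟨halg, hdD, ?_⟩
    have hpos : (0:ℝ) < (degQ a : ℝ) ^ γ' := Real.rpow_pos_of_pos hd0 γ'
    have haw' : (degQ a:ℝ) ^ γ' * weilHeight a < C' := haw
    have h9 : weilHeight a < C' * ((degQ a:ℝ) ^ (-γ')) := by
      rw [Real.rpow_neg (le_of_lt hd0)]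
      calc weilHeight a = ((degQ a:ℝ) ^ γ' * weilHeight a) * ((degQ a:ℝ) ^ γ')⁻¹ := by
            field_simp
        _ < C' * ((degQ a:ℝ) ^ γ')⁻¹ := by
            exact mul_lt_mul_of_pos_right haw' (by positivity)
    have h10 : (degQ a:ℝ) ^ (-γ') ≤ max 1 ((Dnat:ℝ) ^ (-γ')) := by
      rcases le_or_gt 0 (-γ') with hs | hs
      · refine le_trans (Real.rpow_le_rpow (le_of_lt hd0) ?_ hs) (le_max_right _ _)
        exact_mod_cast hdD
      · exact le_trans (Real.rpow_le_one_of_one_le_of_nonpos hd1 (le_of_lt hs))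
          (le_max_left _ _)
    calc weilHeight a < C' * ((degQ a:ℝ) ^ (-γ')) := h9
      _ ≤ C0 := mul_le_mul_of_nonneg_left h10 (le_of_lt hC')
  exact Set.Finite.subset ((hμ.union hfin).union (northcott_finite Dnat C0)) hsub

/-- If `A ⊆ ℚ̄` contains only finitely many roots of unity, then
`inf I_N(A) = inf I_B(A)` (infima taken in `ℝ ∪ {±∞}`). -/
theorem inf_IN_eq_inf_IB (A : Set ℂ) (hA : ∀ a ∈ A, IsAlgebraic ℚ a)
    (hμ : (muSet A).Finite) :
    sInf ((fun γ : ℝ => (γ : EReal)) '' IN A) =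
      sInf ((fun γ : ℝ => (γ : EReal)) '' IB A) := by
  apply le_antisymm
  · apply le_sInf
    rintro b ⟨γ, hγ, rfl⟩
    by_contra hcon
    push_neg at hcon
    obtain ⟨c, hc1, hc2⟩ := EReal.lt_iff_exists_real_btwn.mp hcon
    have hγc : γ < c := by exact_mod_cast hc1
    have hmem : (c : EReal) ∈ (fun γ : ℝ => (γ : EReal)) '' IN A :=
      Set.mem_image_of_mem _ (mem_IN_of_gt hA hμ hγ hγc)
    exact absurd (sInf_le hmem) (not_le.mpr hc2)
  · exact sInf_le_sInf (Set.image_mono (IN_subset_IB A))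

end
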